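/- arXiv:2303.06454 — 3 statements merged into one kernel-verified Lean document; each statement's English description precedes it below -/
import Mathlib

section
/- The quotient A/γ_2(H) is elementary abelian of rank s = ℓ(λ), and the minimal number of generators d(A) of A satisfies d(A) = Σ_{j=1}^{p−1} d_j, where d_j = #{ i : 1 ≤ i ≤ s, n_i ≥ j } is the number of parts of λ that are ≥ j. -/
open DirectSum Polynomial

set_option synthInstance.maxHeartbeats 1000000
set_option maxHeartbeats 1000000

section Aux

lemma aux_mul_to_add {G V : Type*} [Group G] [AddCommGroup V] (f : G ≃ V)
    (hf : ∀ a b, f (a * b) = f a + f b) :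
    {k : ℕ | ∃ S : Finset G, S.card = k ∧ Subgroup.closure (S : Set G) = ⊤} ⊆
    {k : ℕ | ∃ T : Finset V, T.card = k ∧ AddSubgroup.closure (T : Set V) = ⊤} := by
  classical
  rintro k ⟨S, rfl, hcl⟩
  have h1 : f 1 = 0 := by
    have := hf 1 1; rw [one_mul] at this
    exact (left_eq_add.mp this)
  have hinv : ∀ a, f a⁻¹ = - f a := by
    intro a
    have := hf a a⁻¹; rw [mul_inv_cancel, h1] at this
    exact (neg_eq_of_add_eq_zero_right this.symm).symm
  refine ⟨S.image f, Finset.card_image_of_injective _ f.injective, ?_⟩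
  rw [AddSubgroup.eq_top_iff']
  intro v
  have key : ∀ g, g ∈ Subgroup.closure (S : Set G) →
      f g ∈ AddSubgroup.closure ((S.image f : Finset V) : Set V) := by
    intro g hg
    induction hg using Subgroup.closure_induction with
    | mem y hy =>
        exact AddSubgroup.subset_closure (by simpa using Finset.mem_image_of_mem f hy)
    | one => rw [h1]; exact zero_mem _
    | mul a b _ _ ha hb => rw [hf]; exact add_mem ha hb
    | inv a _ ha => rw [hinv]; exact neg_mem ha
  have := key (f.symm v) (by rw [hcl]; trivial)
  simpa using this

lemma aux_gen_transfer {G V : Type*} [Group G] [AddCommGroup V] (f : G ≃ V)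
    (hf : ∀ a b, f (a * b) = f a + f b) :
    {k : ℕ | ∃ S : Finset G, S.card = k ∧ Subgroup.closure (S : Set G) = ⊤} =
    {k : ℕ | ∃ T : Finset V, T.card = k ∧ AddSubgroup.closure (T : Set V) = ⊤} := by
  classical
  apply Set.Subset.antisymm (aux_mul_to_add f hf)
  -- reverse: use f.symm viewed as mul_to_add from Vᵐᵒᵖ? Instead redo by hand:
  rintro k ⟨T, rfl, hcl⟩
  have hf' : ∀ u v : V, f.symm (u + v) = f.symm u * f.symm v := by
    intro u v
    apply f.injective
    rw [hf]; simp
  have h1 : f.symm 0 = 1 := by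
    apply f.injective
    have := hf 1 1; rw [one_mul] at this
    have h0 : f 1 = 0 := left_eq_add.mp this
    simp [h0]
  have hinv : ∀ a : V, f.symm (-a) = (f.symm a)⁻¹ := by
    intro a
    apply f.injective
    have h0 : f 1 = 0 := by
      have := hf 1 1; rw [one_mul] at this; exact left_eq_add.mp this
    have := hf (f.symm a) (f.symm a)⁻¹
    rw [mul_inv_cancel, h0] at this
    simp [(neg_eq_of_add_eq_zero_right this.symm).symm]
  refine ⟨T.image f.symm, Finset.card_image_of_injective _ f.symm.injective, ?_⟩
  rw [Subgroup.eq_top_iff']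
  intro gval
  have key : ∀ v, v ∈ AddSubgroup.closure (T : Set V) →
      f.symm v ∈ Subgroup.closure ((T.image f.symm : Finset G) : Set G) := by
    intro v hv
    induction hv using AddSubgroup.closure_induction with
    | mem y hy =>
        exact Subgroup.subset_closure (by simpa using Finset.mem_image_of_mem f.symm hy)
    | zero => rw [h1]; exact one_mem _
    | add a b _ _ ha hb => rw [hf']; exact mul_mem ha hb
    | neg a _ ha => rw [hinv]; exact inv_mem ha
  have := key (f gval) (by rw [hcl]; trivial)
  simpa using this

lemma aux_commute_of_gen {G : Type*} [Group G] (S : Set G) (h : Subgroup.closure S = ⊤)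
    (hc : ∀ a ∈ S, ∀ b ∈ S, Commute a b) (u v : G) : Commute u v := by
  have hu : u ∈ Subgroup.closure S := by rw [h]; trivial
  have hv : v ∈ Subgroup.closure S := by rw [h]; trivial
  induction hu, hv using Subgroup.closure_induction₂ with
  | mem a b ha hb => exact hc a ha b hb
  | one_left a _ => exact Commute.one_left a
  | one_right a _ => exact Commute.one_right a
  | mul_left a b c _ _ _ h1 h2 => exact h1.mul_left h2
  | mul_right a b c _ _ _ h1 h2 => exact h1.mul_right h2
  | inv_left a b _ _ h1 => exact h1.inv_left
  | inv_right a b _ _ h1 => exact h1.inv_right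

lemma aux_nakayama {V : Type*} [AddCommGroup V] (p e : ℕ) (he : ∀ v : V, p ^ e • v = 0)
    (K : AddSubgroup V) (hK : ∀ v : V, ∃ k ∈ K, ∃ w : V, v = k + p • w) : K = ⊤ := by
  have key : ∀ j : ℕ, ∀ v : V, ∃ k ∈ K, ∃ w : V, v = k + p ^ j • w := by
    intro j
    induction j with
    | zero => intro v; exact ⟨0, zero_mem _, v, by simp⟩
    | succ j ih =>
        intro v
        obtain ⟨k, hk, w, rfl⟩ := ih v
        obtain ⟨k', hk', w', rfl⟩ := hK w
        refine ⟨k + p ^ j • k', add_mem hk (AddSubgroup.nsmul_mem _ hk' _), w', ?_⟩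
        rw [smul_add, ← add_assoc, smul_smul, pow_succ]
  rw [AddSubgroup.eq_top_iff']
  intro v
  obtain ⟨k, hk, w, rfl⟩ := key e v
  rw [he w, add_zero]
  exact hk

end Aux

lemma aux_closure_eq_top_iff_span {p : ℕ} [Fact p.Prime] [NeZero p] {V : Type*} [AddCommGroup V]
    [Module (ZMod p) V] (S : Set V) :
    AddSubgroup.closure S = ⊤ ↔ Submodule.span (ZMod p) S = ⊤ := by
  constructor
  · intro h
    rw [Submodule.eq_top_iff']
    intro v
    have hv : v ∈ AddSubgroup.closure S := by rw [h]; trivial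
    induction hv using AddSubgroup.closure_induction with
    | mem y hy => exact Submodule.subset_span hy
    | zero => exact zero_mem _
    | add a b _ _ ha hb => exact add_mem ha hb
    | neg a _ ha => exact neg_mem ha
  · intro h
    rw [AddSubgroup.eq_top_iff']
    intro v
    have hv : v ∈ Submodule.span (ZMod p) S := by rw [h]; trivial
    induction hv using Submodule.span_induction with
    | mem y hy => exact AddSubgroup.subset_closure hy
    | zero => exact zero_mem _
    | add a b _ _ ha hb => exact add_mem ha hb
    | smul c v hv hc =>
        have hcv : ((c.val : ℕ) : ZMod p) = c := by simp [ZMod.natCast_val, ZMod.cast_id]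
        rw [← hcv, Nat.cast_smul_eq_nsmul]
        exact AddSubgroup.nsmul_mem _ hc _
lemma aux_mingen_eq_finrank (p : ℕ) [Fact p.Prime] (V : Type*) [AddCommGroup V]
    [Module (ZMod p) V] [Module.Finite (ZMod p) V] :
    sInf {k : ℕ | ∃ S : Finset V, S.card = k ∧ AddSubgroup.closure (S : Set V) = ⊤} =
      Module.finrank (ZMod p) V := by
  classical
  haveI : NeZero p := ⟨(Fact.out : p.Prime).ne_zero⟩
  set d := Module.finrank (ZMod p) V with hd
  let b := Module.finBasis (ZMod p) V
  have hmem : d ∈ {k : ℕ | ∃ S : Finset V, S.card = k ∧ AddSubgroup.closure (S : Set V) = ⊤} := by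
    refine ⟨Finset.univ.image b, ?_, ?_⟩
    · rw [Finset.card_image_of_injective _ b.injective, Finset.card_univ, Fintype.card_fin]
    · rw [aux_closure_eq_top_iff_span (p := p)]
      have : ((Finset.univ.image b : Finset V) : Set V) = Set.range b := by
        ext v; simp
      rw [this, b.span_eq]
  apply le_antisymm (Nat.sInf_le hmem)
  apply le_csInf ⟨d, hmem⟩
  rintro k ⟨S, rfl, hS⟩
  rw [aux_closure_eq_top_iff_span (p := p)] at hS
  have := finrank_span_le_card (R := ZMod p) (S : Set V)
  rw [hS] at this
  simpa [hd, finrank_top] using this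

lemma aux_sum_min {s : ℕ} (n : Fin s → ℕ) (m : ℕ) :
    ∑ i, min (n i) m = ∑ j ∈ Finset.Icc 1 m, (Finset.univ.filter (fun i : Fin s => j ≤ n i)).card := by
  classical
  have : ∀ j, (Finset.univ.filter (fun i : Fin s => j ≤ n i)).card
      = ∑ i : Fin s, if j ≤ n i then 1 else 0 := by
    intro j; rw [Finset.card_filter]
  simp_rw [this]
  rw [Finset.sum_comm]
  apply Finset.sum_congr rfl
  intro i _
  have : ∑ j ∈ Finset.Icc 1 m, (if j ≤ n i then 1 else 0)
      = (Finset.filter (fun j => j ≤ n i) (Finset.Icc 1 m)).card := by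
    rw [Finset.card_filter]
  rw [this]
  have : Finset.filter (fun j => j ≤ n i) (Finset.Icc 1 m) = Finset.Icc 1 (min (n i) m) := by
    ext j
    simp only [Finset.mem_filter, Finset.mem_Icc, le_min_iff]
    omega
  rw [this, Nat.card_Icc]
  omega
section RingSide

variable (p : ℕ) [hp : Fact p.Prime] (g : ℤ_[p][X])

lemma aux_g_decomp (hg : g = ∑ i ∈ Finset.Icc 1 p, C (p.choose i : ℤ_[p]) * X ^ (i - 1)) :
    ∃ w t : ℤ_[p][X], g = C (p : ℤ_[p]) * w + X ^ (p - 1) ∧ w = 1 + X * t := by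
  classical
  have hp2 : 2 ≤ p := hp.out.two_le
  set c : ℕ → ℤ_[p] := fun i => ((p.choose i / p : ℕ) : ℤ_[p]) with hc
  refine ⟨∑ i ∈ Finset.Icc 1 (p - 1), C (c i) * X ^ (i - 1),
      ∑ i ∈ Finset.Icc 2 (p - 1), C (c i) * X ^ (i - 2), ?_, ?_⟩
  · rw [hg]
    have hsplit : Finset.Icc 1 p = insert p (Finset.Icc 1 (p - 1)) := by
      ext j; simp only [Finset.mem_Icc, Finset.mem_insert]; omega
    rw [hsplit, Finset.sum_insert (by simp only [Finset.mem_Icc]; omega)]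
    rw [Nat.choose_self, Nat.cast_one, map_one, one_mul, Finset.mul_sum]
    rw [add_comm]
    congr 1
    apply Finset.sum_congr rfl
    intro i hi
    simp only [Finset.mem_Icc] at hi
    have hdvd : p ∣ p.choose i := hp.out.dvd_choose_self (by omega) (by omega)
    have hcast : (p.choose i : ℤ_[p]) = (p : ℤ_[p]) * c i := by
      rw [hc]
      rw [← Nat.cast_mul, Nat.mul_div_cancel' hdvd]
    rw [hcast, map_mul, mul_assoc]
  · have hsplit : Finset.Icc 1 (p - 1) = insert 1 (Finset.Icc 2 (p - 1)) := by
      ext j; simp only [Finset.mem_Icc, Finset.mem_insert]; omega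
    rw [hsplit, Finset.sum_insert (by simp only [Finset.mem_Icc]; omega)]
    have hc1 : c 1 = 1 := by
      rw [hc]; simp [Nat.choose_one_right, Nat.div_self (by omega : 0 < p)]
    rw [hc1, map_one, pow_zero, mul_one, Finset.mul_sum]
    congr 1
    apply Finset.sum_congr rfl
    intro i hi
    simp only [Finset.mem_Icc] at hi
    have : i - 1 = (i - 2) + 1 := by omega
    rw [this, pow_succ]
    ring

lemma aux_span_p (hg : g = ∑ i ∈ Finset.Icc 1 p, C (p.choose i : ℤ_[p]) * X ^ (i - 1)) :
    Ideal.span {((p : ℕ) : ℤ_[p][X] ⧸ Ideal.span {g})} =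
      (Ideal.span {Ideal.Quotient.mk (Ideal.span {g}) X}) ^ (p - 1) := by
  obtain ⟨w, t, hgw, hwt⟩ := aux_g_decomp p g hg
  set mk := Ideal.Quotient.mk (Ideal.span {g}) with hmk
  set π : ℤ_[p][X] ⧸ Ideal.span {g} := mk X with hπ
  have hg0 : mk g = 0 := Ideal.Quotient.eq_zero_iff_mem.mpr (Ideal.mem_span_singleton_self g)
  have key : ((p : ℕ) : ℤ_[p][X] ⧸ Ideal.span {g}) * mk w = -π ^ (p - 1) := by
    have h1 := congrArg mk hgw
    rw [hg0, map_add, map_mul, map_pow] at h1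
    have h2 : mk (C (p : ℤ_[p])) = ((p : ℕ) : ℤ_[p][X] ⧸ Ideal.span {g}) := by
      rw [Polynomial.C_eq_natCast, map_natCast]
    rw [h2] at h1
    linear_combination -h1
  have hw : mk w = 1 + π * mk t := by
    have := congrArg mk hwt
    simpa using this
  have key' : ((p : ℕ) : ℤ_[p][X] ⧸ Ideal.span {g}) * (1 + π * mk t) = -π ^ (p - 1) := by
    rw [← hw]; exact key
  have hπP : π ∈ Ideal.span {π} := Ideal.mem_span_singleton_self π
  have hpmem : ∀ k, k ≤ p - 1 → ((p : ℕ) : ℤ_[p][X] ⧸ Ideal.span {g}) ∈ (Ideal.span {π}) ^ k := by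
    intro k
    induction k with
    | zero => intro _; simp
    | succ k ih =>
        intro hk
        have ihh := ih (by omega)
        have hpeq : ((p : ℕ) : ℤ_[p][X] ⧸ Ideal.span {g})
            = -π ^ (p - 1) - π * (((p : ℕ) : ℤ_[p][X] ⧸ Ideal.span {g}) * mk t) := by
          linear_combination key'
        rw [hpeq]
        apply sub_mem
        · exact neg_mem (Ideal.pow_le_pow_right hk (Ideal.pow_mem_pow hπP (p - 1)))
        · have h1 : ((p : ℕ) : ℤ_[p][X] ⧸ Ideal.span {g}) * mk t ∈ (Ideal.span {π}) ^ k :=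
            Ideal.mul_mem_right _ _ ihh
          have h2 : π * (((p : ℕ) : ℤ_[p][X] ⧸ Ideal.span {g}) * mk t)
              ∈ Ideal.span {π} * (Ideal.span {π}) ^ k := Ideal.mul_mem_mul hπP h1
          rw [Ideal.IsTwoSided.pow_succ]; exact h2
  apply le_antisymm
  · rw [Ideal.span_le, Set.singleton_subset_iff]
    exact hpmem (p - 1) le_rfl
  · rw [Ideal.span_singleton_pow, Ideal.span_le, Set.singleton_subset_iff]
    rw [SetLike.mem_coe, Ideal.mem_span_singleton']
    exact ⟨-mk w, by linear_combination -key⟩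

end RingSide


section RingSide2

variable (p : ℕ) [hp : Fact p.Prime] (g : ℤ_[p][X])

-- surjectivity of toZMod
lemma aux_toZMod_surj : Function.Surjective (PadicInt.toZMod (p := p)) := by
  intro z
  refine ⟨((z.val : ℕ) : ℤ_[p]), ?_⟩
  rw [map_natCast]
  simp [ZMod.natCast_val, ZMod.cast_id]

-- ℤ_[p][X] ⧸ span {C p} ≃+* (ZMod p)[X]
noncomputable def auxBaseEquiv : (ℤ_[p][X] ⧸ Ideal.span {C (p : ℤ_[p])}) ≃+* (ZMod p)[X] := by
  have hker : RingHom.ker (Polynomial.mapRingHom (PadicInt.toZMod (p := p)))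
      = Ideal.span {C (p : ℤ_[p])} := by
    rw [Polynomial.ker_mapRingHom, PadicInt.ker_toZMod, PadicInt.maximalIdeal_eq_span_p,
      Ideal.map_span, Set.image_singleton]
  exact (Ideal.quotEquivOfEq hker.symm).trans
    (RingHom.quotientKerEquivOfSurjective
      (Polynomial.map_surjective _ (aux_toZMod_surj p)))

lemma auxBaseEquiv_mk (f : ℤ_[p][X]) :
    auxBaseEquiv p (Ideal.Quotient.mk _ f) = Polynomial.map (PadicInt.toZMod (p := p)) f := by
  unfold auxBaseEquiv
  simp only [RingEquiv.trans_apply, Ideal.quotEquivOfEq_mk]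
  exact (RingHom.quotientKerEquivOfRightInverse.apply _ _).trans
    (RingHom.kerLift_mk _ f)

-- the main equivalence for 1 ≤ m ≤ p-1
lemma aux_emap (hg : g = ∑ i ∈ Finset.Icc 1 p, C (p.choose i : ℤ_[p]) * X ^ (i - 1))
    (m : ℕ) (hm1 : 1 ≤ m) (hm2 : m ≤ p - 1) :
    Nonempty ((((ℤ_[p][X] ⧸ Ideal.span {g})) ⧸
        ((Ideal.span {Ideal.Quotient.mk (Ideal.span {g}) X} : Ideal _) ^ m)) ≃+*
      ((ZMod p)[X] ⧸ Ideal.span {(X : (ZMod p)[X]) ^ m})) := by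
  classical
  obtain ⟨w, t, hgw, hwt⟩ := aux_g_decomp p g hg
  -- step A : rewrite the ideal as a map
  have hPm : (Ideal.span {Ideal.Quotient.mk (Ideal.span {g}) X} : Ideal _) ^ m
      = (Ideal.span {(X : ℤ_[p][X]) ^ m}).map (Ideal.Quotient.mk (Ideal.span {g})) := by
    rw [Ideal.span_singleton_pow, Ideal.map_span, Set.image_singleton, map_pow]
  have e1 := Ideal.quotEquivOfEq hPm
  have e2 := DoubleQuot.quotQuotEquivComm (Ideal.span {g}) (Ideal.span {(X : ℤ_[p][X]) ^ m})
  -- step B : inside ℤ_[p][X] ⧸ (X^m), the image of (g) equals the image of (C p)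
  have hXm0 : (Ideal.Quotient.mk (Ideal.span {(X : ℤ_[p][X]) ^ m})) (X ^ (p-1)) = 0 := by
    rw [Ideal.Quotient.eq_zero_iff_mem, Ideal.mem_span_singleton]
    exact pow_dvd_pow X hm2
  have hXnil : IsNilpotent ((Ideal.Quotient.mk (Ideal.span {(X : ℤ_[p][X]) ^ m})) X) := by
    refine ⟨m, ?_⟩
    rw [← map_pow, Ideal.Quotient.eq_zero_iff_mem]
    exact Ideal.mem_span_singleton_self _
  have hunit : IsUnit ((Ideal.Quotient.mk (Ideal.span {(X : ℤ_[p][X]) ^ m})) w) := by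
    have : (Ideal.Quotient.mk (Ideal.span {(X : ℤ_[p][X]) ^ m})) w
        = 1 - (-((Ideal.Quotient.mk (Ideal.span {(X : ℤ_[p][X]) ^ m})) (X * t))) := by
      rw [hwt]; push_cast [map_add, map_one, map_mul]; ring
    rw [this, map_mul]
    exact IsNilpotent.isUnit_one_sub (((Commute.all _ _).isNilpotent_mul_right hXnil).neg)
  have hspan : (Ideal.span {g}).map (Ideal.Quotient.mk (Ideal.span {(X : ℤ_[p][X]) ^ m}))
      = (Ideal.span {C (p : ℤ_[p])}).map (Ideal.Quotient.mk (Ideal.span {(X : ℤ_[p][X]) ^ m})) := by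
    rw [Ideal.map_span, Ideal.map_span, Set.image_singleton, Set.image_singleton]
    have : (Ideal.Quotient.mk (Ideal.span {(X : ℤ_[p][X]) ^ m})) g
        = (Ideal.Quotient.mk (Ideal.span {(X : ℤ_[p][X]) ^ m})) (C (p : ℤ_[p])) *
          (Ideal.Quotient.mk (Ideal.span {(X : ℤ_[p][X]) ^ m})) w := by
      rw [hgw, map_add, map_mul, hXm0, add_zero]
    rw [this]
    exact Ideal.span_singleton_mul_right_unit hunit _
  have e3 := Ideal.quotEquivOfEq hspan
  have e4 := DoubleQuot.quotQuotEquivComm (Ideal.span {(X : ℤ_[p][X]) ^ m})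
    (Ideal.span {C (p : ℤ_[p])})
  -- step E : transport along auxBaseEquiv
  have hIJ : Ideal.span {(X : (ZMod p)[X]) ^ m}
      = ((Ideal.span {(X : ℤ_[p][X]) ^ m}).map
          (Ideal.Quotient.mk (Ideal.span {C (p : ℤ_[p])}))).map
        (auxBaseEquiv p : (ℤ_[p][X] ⧸ Ideal.span {C (p : ℤ_[p])}) →+* (ZMod p)[X]) := by
    rw [Ideal.map_map, Ideal.map_span, Set.image_singleton]
    have : ((auxBaseEquiv p : (ℤ_[p][X] ⧸ Ideal.span {C (p : ℤ_[p])}) →+* (ZMod p)[X]).comp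
        (Ideal.Quotient.mk (Ideal.span {C (p : ℤ_[p])}))) ((X : ℤ_[p][X]) ^ m)
        = (X : (ZMod p)[X]) ^ m := by
      simp only [RingHom.comp_apply]
      rw [show ((auxBaseEquiv p : (ℤ_[p][X] ⧸ Ideal.span {C (p : ℤ_[p])}) →+* (ZMod p)[X])
          ((Ideal.Quotient.mk (Ideal.span {C (p : ℤ_[p])})) ((X : ℤ_[p][X]) ^ m)))
          = Polynomial.map (PadicInt.toZMod (p := p)) ((X : ℤ_[p][X]) ^ m) from
          auxBaseEquiv_mk p _]
      rw [Polynomial.map_pow, Polynomial.map_X]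
    rw [this]
  have e5 := Ideal.quotientEquiv _ _ (auxBaseEquiv p) hIJ
  exact ⟨e1.trans (e2.trans (e3.trans (e4.trans e5)))⟩

lemma aux_card_quot (m : ℕ) :
    Nat.card ((ZMod p)[X] ⧸ Ideal.span {(X : (ZMod p)[X]) ^ m}) = p ^ m := by
  classical
  have hX : (X : (ZMod p)[X]) ^ m ≠ 0 := pow_ne_zero m Polynomial.X_ne_zero
  let pb := AdjoinRoot.powerBasis (K := ZMod p) hX
  have hdim : pb.dim = m := by
    simp [pb, AdjoinRoot.powerBasis, Polynomial.natDegree_X_pow]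
  have ecard : Nat.card (AdjoinRoot ((X : (ZMod p)[X]) ^ m))
      = Nat.card (Fin pb.dim → ZMod p) := Nat.card_congr pb.basis.equivFun.toEquiv
  have : Nat.card ((ZMod p)[X] ⧸ Ideal.span {(X : (ZMod p)[X]) ^ m})
      = Nat.card (AdjoinRoot ((X : (ZMod p)[X]) ^ m)) := rfl
  rw [this, ecard, Nat.card_fun, Nat.card_zmod, Nat.card_eq_fintype_card, Fintype.card_fin, hdim]

lemma aux_emap1 (hg : g = ∑ i ∈ Finset.Icc 1 p, C (p.choose i : ℤ_[p]) * X ^ (i - 1)) :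
    Nonempty ((((ℤ_[p][X] ⧸ Ideal.span {g})) ⧸
        (Ideal.span {Ideal.Quotient.mk (Ideal.span {g}) X} : Ideal _)) ≃+ ZMod p) := by
  have hp2 : 2 ≤ p := hp.out.two_le
  obtain ⟨e⟩ := aux_emap p g hg 1 le_rfl (by omega)
  have h1 : (Ideal.span {Ideal.Quotient.mk (Ideal.span {g}) X} : Ideal _)
      = (Ideal.span {Ideal.Quotient.mk (Ideal.span {g}) X} : Ideal _) ^ 1 := (pow_one _).symm
  have e0 := Ideal.quotEquivOfEq h1
  have h2 : Ideal.span {(X : (ZMod p)[X]) ^ 1} = Ideal.span {X - C (0 : ZMod p)} := by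
    rw [pow_one, map_zero, sub_zero]
  have e6 := Ideal.quotEquivOfEq h2
  have e7 := (Polynomial.quotientSpanXSubCAlgEquiv (0 : ZMod p)).toRingEquiv
  exact ⟨(e0.trans (e.trans (e6.trans e7))).toAddEquiv⟩

end RingSide2
open scoped commutatorElement in
theorem aux_main (p : ℕ) [Fact p.Prime]
    (H : Type) [Group H] (A : Subgroup H) [A.Normal] [Finite A]
    (hab : ∀ a ∈ A, ∀ b ∈ A, a * b = b * a)
    (x : H)
    (hgen : Subgroup.closure ((A : Set H) ∪ {x}) = ⊤)
    (s : ℕ) (n : Fin s → ℕ) (hpos : ∀ i, 1 ≤ n i)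
    (R : Type) [CommRing R] (π : R)
    (hspanp : Ideal.span {((p : ℕ) : R)} = (Ideal.span {π}) ^ (p - 1))
    (ε : (R ⧸ Ideal.span {π}) ≃+ ZMod p)
    (hcard : ∀ m : ℕ, 1 ≤ m → m ≤ p - 1 → Nat.card (R ⧸ (Ideal.span {π}) ^ m) = p ^ m)
    (θ' : ↥A → ∀ i : Fin s, R ⧸ (Ideal.span {π}) ^ (n i))
    (hθ'bij : Function.Bijective θ')
    (hθ'add : ∀ a b : ↥A, θ' (a * b) = θ' a + θ' b)
    (hθ'int : ∀ (a : H) (ha : a ∈ A) (hb : x⁻¹ * a * x ∈ A),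
      θ' ⟨x⁻¹ * a * x, hb⟩ = fun i => (1 + π) • θ' ⟨a, ha⟩ i) :
    Nonempty ((↥A ⧸ (((⊤ : Subgroup H).lowerCentralSeries 1).subgroupOf A)) ≃*
        Multiplicative (Fin s → ZMod p)) ∧
    sInf {k : ℕ | ∃ S : Finset ↥A, S.card = k ∧ Subgroup.closure (S : Set ↥A) = ⊤} =
      ∑ j ∈ Finset.Icc 1 (p - 1), (Finset.univ.filter (fun i : Fin s => j ≤ n i)).card := by
  classical
  have hp2 : 2 ≤ p := (Fact.out : p.Prime).two_le
  haveI : NeZero p := ⟨by omega⟩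
  have hθ'one : θ' 1 = 0 := by
    have := hθ'add 1 1
    rw [one_mul] at this
    exact left_eq_add.mp this
  have hθ'inv : ∀ a : ↥A, θ' a⁻¹ = - θ' a := by
    intro a
    have := hθ'add a a⁻¹
    rw [mul_inv_cancel, hθ'one] at this
    exact (neg_eq_of_add_eq_zero_right this.symm).symm
  -- smul on ideal quotients
  have hsmul : ∀ (I : Ideal R) (c r : R),
      c • (Ideal.Quotient.mk I r) = Ideal.Quotient.mk I (c * r) := by
    intro I c r
    rw [← Ideal.Quotient.mk_eq_mk, ← Ideal.Quotient.mk_eq_mk, ← Submodule.Quotient.mk_smul,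
      smul_eq_mul]
  -- factor maps
  have hfacle : ∀ i : Fin s, (Ideal.span {π}) ^ (n i) ≤ Ideal.span {π} := fun i =>
    Ideal.pow_le_self (by have := hpos i; omega)
  set fac : ∀ i : Fin s, (R ⧸ (Ideal.span {π}) ^ (n i)) →+* (R ⧸ Ideal.span {π}) :=
    fun i => Ideal.Quotient.factor (hfacle i) with hfacdef
  have hπ0 : Ideal.Quotient.mk (Ideal.span {π}) π = 0 :=
    Ideal.Quotient.eq_zero_iff_mem.mpr (Ideal.mem_span_singleton_self π)
  have hfac1 : ∀ (i : Fin s) (v : R ⧸ (Ideal.span {π}) ^ (n i)), fac i ((1 + π) • v) = fac i v := by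
    intro i v
    obtain ⟨r, rfl⟩ := Ideal.Quotient.mk_surjective v
    rw [hsmul, Ideal.Quotient.factor_mk, Ideal.Quotient.factor_mk, map_mul, map_add, map_one, hπ0,
      add_zero, one_mul]
  have hfac2 : ∀ (i : Fin s) (v : R ⧸ (Ideal.span {π}) ^ (n i)), fac i (π • v) = 0 := by
    intro i v
    obtain ⟨r, rfl⟩ := Ideal.Quotient.mk_surjective v
    rw [hsmul, Ideal.Quotient.factor_mk, map_mul, hπ0, zero_mul]
  have hfac3 : ∀ (i : Fin s) (v : R ⧸ (Ideal.span {π}) ^ (n i)), fac i v = 0 → ∃ y, v = π • y := by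
    intro i v hv
    obtain ⟨r, rfl⟩ := Ideal.Quotient.mk_surjective v
    rw [Ideal.Quotient.factor_mk, Ideal.Quotient.eq_zero_iff_mem,
      Ideal.mem_span_singleton] at hv
    obtain ⟨c, rfl⟩ := hv
    exact ⟨Ideal.Quotient.mk _ c, by rw [hsmul]⟩
  -- the homomorphism Φ
  set Φ : ↥A →* Multiplicative (Fin s → ZMod p) :=
    MonoidHom.mk' (fun a => Multiplicative.ofAdd (fun i => ε (fac i (θ' a i))))
      (by
        intro a b
        skip
        have : (fun i => ε (fac i (θ' (a * b) i)))
            = (fun i => ε (fac i (θ' a i))) + (fun i => ε (fac i (θ' b i))) := by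
          funext i
          rw [hθ'add a b]
          show ε (fac i (θ' a i + θ' b i)) = _
          rw [map_add, map_add]; rfl
        rw [this]; rfl) with hΦdef
  have hΦapp : ∀ a : ↥A, Φ a = Multiplicative.ofAdd (fun i => ε (fac i (θ' a i))) := fun a => rfl
  have hΦsurj : Function.Surjective Φ := by
    intro v
    set u : Fin s → ZMod p := Multiplicative.toAdd v with hudef
    have hfs : ∀ i : Fin s, ∃ y : R ⧸ (Ideal.span {π}) ^ (n i), fac i y = ε.symm (u i) := by
      intro i
      obtain ⟨r, hr⟩ := Ideal.Quotient.mk_surjective (ε.symm (u i))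
      exact ⟨Ideal.Quotient.mk _ r, by rw [Ideal.Quotient.factor_mk, hr]⟩
    choose y hy using hfs
    obtain ⟨a, ha⟩ := hθ'bij.2 y
    refine ⟨a, ?_⟩
    rw [hΦapp]
    have : (fun i => ε (fac i (θ' a i))) = u := by
      funext i
      rw [ha, hy i, AddEquiv.apply_symm_apply]
    rw [this]
    rfl
  have hker_iff : ∀ a : ↥A, a ∈ Φ.ker ↔ ∀ i, ∃ y, θ' a i = π • y := by
    intro a
    rw [MonoidHom.mem_ker, hΦapp]
    constructor
    · intro h i
      have h0 : (fun i => ε (fac i (θ' a i))) = (0 : Fin s → ZMod p) := h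
      have h1 : ε (fac i (θ' a i)) = 0 := by
        have := congrFun h0 i
        simpa using this
      have hz : fac i (θ' a i) = 0 := by
        apply ε.injective
        rw [h1, map_zero]
      exact hfac3 i _ hz
    · intro h
      have : (fun i => ε (fac i (θ' a i))) = (0 : Fin s → ZMod p) := by
        funext i
        obtain ⟨y, hy⟩ := h i
        rw [hy, hfac2, map_zero]; rfl
      show Multiplicative.ofAdd _ = 1
      rw [this]; rfl
  -- conjugation invariance of Φ
  have hconj : ∀ (k : H) (hk : k ∈ A) (hk' : x⁻¹ * k * x ∈ A),
      Φ ⟨x⁻¹ * k * x, hk'⟩ = Φ ⟨k, hk⟩ := by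
    intro k hk hk'
    rw [hΦapp, hΦapp]
    congr 1
    funext i
    rw [hθ'int k hk hk', hfac1]
  have hconj' : ∀ (k : H) (hk : k ∈ A) (hk' : x * k * x⁻¹ ∈ A),
      Φ ⟨x * k * x⁻¹, hk'⟩ = Φ ⟨k, hk⟩ := by
    intro k hk hk'
    have h1 : x⁻¹ * (x * k * x⁻¹) * x ∈ A := by
      have : x⁻¹ * (x * k * x⁻¹) * x = k := by group
      rw [this]; exact hk
    have := hconj (x * k * x⁻¹) hk' h1
    have h2 : (⟨x⁻¹ * (x * k * x⁻¹) * x, h1⟩ : ↥A) = ⟨k, hk⟩ := by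
      apply Subtype.ext; show x⁻¹ * (x * k * x⁻¹) * x = k; group
    rw [h2] at this
    exact this.symm
  -- K : the kernel viewed inside H
  set K : Subgroup H := Subgroup.map A.subtype Φ.ker with hKdef
  have hKmem : ∀ h : H, h ∈ K ↔ ∃ hh : h ∈ A, (⟨h, hh⟩ : ↥A) ∈ Φ.ker := by
    intro h
    constructor
    · rintro ⟨b, hb, rfl⟩
      exact ⟨b.2, by simpa using hb⟩
    · rintro ⟨hh, hker⟩
      exact ⟨⟨h, hh⟩, hker, rfl⟩
  have hKA : ∀ h : H, h ∈ K → h ∈ A := by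
    rintro h ⟨b, _, rfl⟩; exact b.2
  haveI hKnormal : K.Normal := by
    rw [← Subgroup.normalizer_eq_top_iff]
    rw [eq_top_iff, ← hgen]
    rw [Subgroup.closure_le]
    rintro u (hu | hu)
    · -- u ∈ A
      rw [SetLike.mem_coe, Subgroup.mem_normalizer_iff]
      intro h
      constructor
      · intro hh
        have hhA := hKA h hh
        have : u * h * u⁻¹ = h := by
          have := hab u hu h hhA
          rw [this]; group
        rw [this]; exact hh
      · intro hh
        have hhA' : u * h * u⁻¹ ∈ A := hKA _ hh
        have hhA : h ∈ A := by
          have : h = u⁻¹ * (u * h * u⁻¹) * u := by group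
          rw [this]
          exact mul_mem (mul_mem (inv_mem hu) hhA') hu
        have : u * h * u⁻¹ = h := by
          have := hab u hu h hhA
          rw [this]; group
        rwa [this] at hh
    · -- u = x
      simp only [Set.mem_singleton_iff] at hu
      rw [hu]
      rw [SetLike.mem_coe, Subgroup.mem_normalizer_iff]
      intro h
      constructor
      · intro hh
        obtain ⟨hhA, hker⟩ := (hKmem h).mp hh
        have hhA' : x * h * x⁻¹ ∈ A := by
          simpa using ‹A.Normal›.conj_mem h hhA x
        rw [hKmem]
        refine ⟨hhA', ?_⟩
        rw [MonoidHom.mem_ker] at hker ⊢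
        rw [hconj' h hhA hhA']
        exact hker
      · intro hh
        obtain ⟨hhA', hker⟩ := (hKmem _).mp hh
        have hhA : h ∈ A := by
          have h1 : x⁻¹ * (x * h * x⁻¹) * x ∈ A := by
            simpa using ‹A.Normal›.conj_mem _ hhA' x⁻¹
          have : x⁻¹ * (x * h * x⁻¹) * x = h := by group
          rwa [this] at h1
        rw [hKmem]
        refine ⟨hhA, ?_⟩
        rw [MonoidHom.mem_ker] at hker ⊢
        rw [← hconj' h hhA hhA']
        exact hker
  -- commutators of generators lie in K, hence H/K is abelian
  have hcommK : ∀ u v : H, ⁅u, v⁆ ∈ K := by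
    have hgenim : Subgroup.closure ((QuotientGroup.mk' K) '' ((A : Set H) ∪ {x})) = ⊤ := by
      rw [← MonoidHom.map_closure, hgen]
      exact Subgroup.map_top_of_surjective _ (QuotientGroup.mk'_surjective K)
    have hcomm_gen : ∀ a ∈ ((A : Set H) ∪ {x}), ∀ b ∈ ((A : Set H) ∪ {x}), ⁅a, b⁆ ∈ K := by
      have hax : ∀ a ∈ A, ⁅a, x⁆ ∈ K := by
        intro a ha
        have h1 : x * a⁻¹ * x⁻¹ ∈ A := by
          simpa using ‹A.Normal›.conj_mem a⁻¹ (inv_mem ha) x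
        have hmem : ⁅a, x⁆ ∈ A := by
          have : ⁅a, x⁆ = a * (x * a⁻¹ * x⁻¹) := by
            rw [commutatorElement_def]; group
          rw [this]
          exact mul_mem ha h1
        rw [hKmem]
        refine ⟨hmem, ?_⟩
        rw [MonoidHom.mem_ker]
        have hsplit : (⟨⁅a, x⁆, hmem⟩ : ↥A) = ⟨a, ha⟩ * ⟨x * a⁻¹ * x⁻¹, h1⟩ := by
          apply Subtype.ext
          show ⁅a, x⁆ = a * (x * a⁻¹ * x⁻¹)
          rw [commutatorElement_def]; group
        rw [hsplit, map_mul]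
        have hthis : Φ ⟨x * a⁻¹ * x⁻¹, h1⟩ = Φ (⟨a, ha⟩⁻¹) := by
          have h2 : ((⟨a, ha⟩ : ↥A)⁻¹ : ↥A) = ⟨a⁻¹, inv_mem ha⟩ := rfl
          rw [h2]
          exact hconj' a⁻¹ (inv_mem ha) h1
        rw [hthis, ← map_mul, mul_inv_cancel, map_one]
      rintro a (ha | ha) b (hb | hb)
      · rw [commutatorElement_eq_one_iff_commute.mpr]
        · exact one_mem K
        · exact hab a ha b hb
      · simp only [Set.mem_singleton_iff] at hb; rw [hb]
        exact hax a ha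
      · simp only [Set.mem_singleton_iff] at ha; rw [ha]
        have := hax b hb
        have h2 : ⁅x, b⁆ = ⁅b, x⁆⁻¹ := (commutatorElement_inv b x).symm
        rw [h2]
        exact inv_mem this
      · simp only [Set.mem_singleton_iff] at ha hb; rw [ha, hb]
        rw [commutatorElement_self]
        exact one_mem K
    intro u v
    have hq : Commute ((QuotientGroup.mk' K) u) ((QuotientGroup.mk' K) v) := by
      apply aux_commute_of_gen _ hgenim
      rintro a' ⟨a, ha, rfl⟩ b' ⟨b, hb, rfl⟩
      rw [← commutatorElement_eq_one_iff_commute, ← map_commutatorElement,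
        QuotientGroup.mk'_apply, QuotientGroup.eq_one_iff]
      exact hcomm_gen a ha b hb
    have h9 : ((QuotientGroup.mk' K) ⁅u, v⁆) = 1 := by
      rw [map_commutatorElement]
      exact commutatorElement_eq_one_iff_commute.mpr hq
    rwa [QuotientGroup.mk'_apply, QuotientGroup.eq_one_iff] at h9
  -- the subgroup equality
  have hγ : ((⊤ : Subgroup H).lowerCentralSeries 1).subgroupOf A = Φ.ker := by
    ext a
    rw [Subgroup.mem_subgroupOf]
    constructor
    · intro ha
      have hle : (⊤ : Subgroup H).lowerCentralSeries 1 ≤ K := by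
        rw [Subgroup.top_lowerCentralSeries_one, commutator_def, Subgroup.commutator_le]
        intro g1 _ g2 _
        exact hcommK g1 g2
      obtain ⟨hh, hker⟩ := (hKmem ↑a).mp (hle ha)
      have : (⟨(a : H), hh⟩ : ↥A) = a := Subtype.ext rfl
      rwa [this] at hker
    · intro hker
      choose y hy using (hker_iff a).mp hker
      obtain ⟨b, hb⟩ := hθ'bij.2 y
      have hbx : x⁻¹ * ↑b * x ∈ A := by
        have h1 := ‹A.Normal›.conj_mem (↑b) b.2 x⁻¹
        simpa [mul_assoc] using h1
      have hceq : θ' (⟨x⁻¹ * ↑b * x, hbx⟩ * b⁻¹) = θ' a := by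
        funext i
        rw [hθ'add]
        show θ' ⟨x⁻¹ * ↑b * x, hbx⟩ i + θ' b⁻¹ i = θ' a i
        rw [hθ'int (↑b) b.2 hbx]
        have hbc : (⟨(b : H), b.2⟩ : ↥A) = b := Subtype.ext rfl
        rw [hbc, hθ'inv b]
        show (1 + π) • θ' b i + (- θ' b) i = θ' a i
        have : (- θ' b) i = - (θ' b i) := rfl
        rw [this, hy i, hb, add_smul, one_smul]
        abel
      have hca : (⟨x⁻¹ * ↑b * x, hbx⟩ * b⁻¹ : ↥A) = a := hθ'bij.1 hceq
      have : (a : H) = ⁅x⁻¹, (b : H)⁆ := by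
        rw [← hca]
        show x⁻¹ * ↑b * x * (↑b)⁻¹ = ⁅x⁻¹, (b : H)⁆
        rw [commutatorElement_def, inv_inv]
      rw [this, Subgroup.top_lowerCentralSeries_one, commutator_def]
      exact Subgroup.commutator_mem_commutator (Subgroup.mem_top _) (Subgroup.mem_top _)
  constructor
  · exact ⟨(QuotientGroup.quotientMulEquivOfEq hγ).trans
      (QuotientGroup.quotientKerEquivOfSurjective Φ hΦsurj)⟩
  -- Part 2
  · have htrans := aux_gen_transfer (Equiv.ofBijective θ' hθ'bij) (fun a b => hθ'add a b)
    rw [htrans]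
    set c : R := ((p : ℕ) : R) with hcdef
    have hcP : c ∈ Ideal.span {π} := by
      have h1 : c ∈ Ideal.span {c} := Ideal.mem_span_singleton_self c
      rw [hcdef, hspanp] at h1
      exact Ideal.pow_le_self (by omega) h1
    set Npi : ∀ i : Fin s, Submodule R (R ⧸ (Ideal.span {π}) ^ (n i)) := fun i =>
      ((Ideal.span {c}).map (Ideal.Quotient.mk ((Ideal.span {π}) ^ (n i)))).restrictScalars R
      with hNpidef
    set N : Submodule R (∀ i : Fin s, R ⧸ (Ideal.span {π}) ^ (n i)) :=
      Submodule.pi Set.univ Npi with hNdef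
    have hNmem : ∀ v : ∀ i : Fin s, R ⧸ (Ideal.span {π}) ^ (n i),
        v ∈ N ↔ ∃ w, v = c • w := by
      intro v
      constructor
      · intro hv
        have h1 : ∀ i, ∃ y : R ⧸ (Ideal.span {π}) ^ (n i), v i = c • y := by
          intro i
          have h2 : v i ∈ ((Ideal.span {c}).map
              (Ideal.Quotient.mk ((Ideal.span {π}) ^ (n i)))).restrictScalars R :=
            hv i (Set.mem_univ i)
          rw [Submodule.restrictScalars_mem, Ideal.map_span, Set.image_singleton,
            Ideal.mem_span_singleton] at h2
          obtain ⟨d, hd⟩ := h2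
          obtain ⟨r, rfl⟩ := Ideal.Quotient.mk_surjective d
          exact ⟨Ideal.Quotient.mk _ r, by rw [hd, hsmul, map_mul]⟩
        choose w hw using h1
        refine ⟨w, ?_⟩
        funext i
        rw [hw i]
        rfl
      · rintro ⟨w, rfl⟩ i _
        show (c • w) i ∈ ((Ideal.span {c}).map
          (Ideal.Quotient.mk ((Ideal.span {π}) ^ (n i)))).restrictScalars R
        rw [Submodule.restrictScalars_mem]
        obtain ⟨r, hr⟩ := Ideal.Quotient.mk_surjective (w i)
        have hthis : (c • w) i = Ideal.Quotient.mk ((Ideal.span {π}) ^ (n i)) (c * r) := by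
          show c • w i = _
          rw [← hr, hsmul]
        rw [hthis]
        exact Ideal.mem_map_of_mem _ (Ideal.mem_span_singleton.mpr (dvd_mul_right c r))
    haveI hfinM : Finite (∀ i : Fin s, R ⧸ (Ideal.span {π}) ^ (n i)) :=
      Finite.of_surjective θ' hθ'bij.2
    haveI hfinQ : Finite ((∀ i : Fin s, R ⧸ (Ideal.span {π}) ^ (n i)) ⧸ N) :=
      Finite.of_surjective _ (Submodule.Quotient.mk_surjective N)
    haveI hmodQ : Module (ZMod p) ((∀ i : Fin s, R ⧸ (Ideal.span {π}) ^ (n i)) ⧸ N) :=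
      AddCommGroup.zmodModule (by
        intro v
        obtain ⟨w, rfl⟩ := Submodule.Quotient.mk_surjective N v
        rw [← Nat.cast_smul_eq_nsmul R, ← Submodule.Quotient.mk_smul,
          Submodule.Quotient.mk_eq_zero]
        exact (hNmem _).mpr ⟨w, rfl⟩)
    haveI hmfQ : Module.Finite (ZMod p)
      ((∀ i : Fin s, R ⧸ (Ideal.span {π}) ^ (n i)) ⧸ N) := Module.Finite.of_finite
    have hstep : sInf {k : ℕ | ∃ T : Finset (∀ i : Fin s, R ⧸ (Ideal.span {π}) ^ (n i)),
          T.card = k ∧ AddSubgroup.closure (T : Set (∀ i : Fin s, R ⧸ (Ideal.span {π}) ^ (n i))) = ⊤}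
        = sInf {k : ℕ | ∃ T : Finset ((∀ i : Fin s, R ⧸ (Ideal.span {π}) ^ (n i)) ⧸ N),
          T.card = k ∧ AddSubgroup.closure (T : Set ((∀ i : Fin s, R ⧸ (Ideal.span {π}) ^ (n i)) ⧸ N)) = ⊤} := by
      apply le_antisymm
      · have hne : {k : ℕ | ∃ T : Finset ((∀ i : Fin s, R ⧸ (Ideal.span {π}) ^ (n i)) ⧸ N),
            T.card = k ∧ AddSubgroup.closure (T : Set ((∀ i : Fin s, R ⧸ (Ideal.span {π}) ^ (n i)) ⧸ N)) = ⊤}.Nonempty := by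
          haveI : Fintype ((∀ i : Fin s, R ⧸ (Ideal.span {π}) ^ (n i)) ⧸ N) := Fintype.ofFinite _
          refine ⟨(Finset.univ : Finset ((∀ i : Fin s, R ⧸ (Ideal.span {π}) ^ (n i)) ⧸ N)).card, ?_⟩
          exact ⟨Finset.univ, rfl, by rw [Finset.coe_univ, AddSubgroup.closure_univ]⟩
        obtain ⟨T, hTcard, hTcl⟩ := Nat.sInf_mem hne
        choose lift hliftp using Submodule.Quotient.mk_surjective N
        set Sf := T.image lift with hSfdef
        set f := (N.mkQ).toAddMonoidHom with hfdef
        have hKtop : AddSubgroup.closure (Sf : Set (∀ i : Fin s, R ⧸ (Ideal.span {π}) ^ (n i))) = ⊤ := by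
          apply aux_nakayama p (Finset.univ.sup n)
          · intro v
            funext i
            show (p ^ Finset.univ.sup n) • v i = 0
            rw [← Nat.cast_smul_eq_nsmul R]
            obtain ⟨r, hr⟩ := Ideal.Quotient.mk_surjective (v i)
            rw [← hr, hsmul, Ideal.Quotient.eq_zero_iff_mem]
            apply Ideal.mul_mem_right
            have h1 : ((p ^ Finset.univ.sup n : ℕ) : R) = c ^ Finset.univ.sup n := by
              rw [hcdef]; push_cast; rfl
            rw [h1]
            exact Ideal.pow_le_pow_right (Finset.le_sup (Finset.mem_univ i))
              (Ideal.pow_mem_pow hcP _)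
          · intro v
            have hmapK : AddSubgroup.map f (AddSubgroup.closure (Sf : Set (∀ i : Fin s, R ⧸ (Ideal.span {π}) ^ (n i)))) = ⊤ := by
              rw [AddMonoidHom.map_closure]
              rw [eq_top_iff, ← hTcl]
              apply AddSubgroup.closure_mono
              intro t ht
              refine ⟨lift t, ?_, hliftp t⟩
              rw [hSfdef, Finset.coe_image]
              exact Set.mem_image_of_mem lift ht
            have h3 : Submodule.Quotient.mk v ∈ AddSubgroup.map f
                (AddSubgroup.closure (Sf : Set (∀ i : Fin s, R ⧸ (Ideal.span {π}) ^ (n i)))) := by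
              rw [hmapK]; trivial
            obtain ⟨k, hkK, hk⟩ := h3
            have hk' : (Submodule.Quotient.mk v : (∀ i : Fin s, R ⧸ (Ideal.span {π}) ^ (n i)) ⧸ N)
                = Submodule.Quotient.mk k := by
              rw [← hk]; rfl
            have hvk : v - k ∈ N := (Submodule.Quotient.eq N).mp hk'
            obtain ⟨w, hw⟩ := (hNmem _).mp hvk
            refine ⟨k, hkK, w, ?_⟩
            have h4 : c • w = p • w := Nat.cast_smul_eq_nsmul R p w
            rw [← h4, ← hw]
            abel
        calc sInf {k : ℕ | ∃ T : Finset (∀ i : Fin s, R ⧸ (Ideal.span {π}) ^ (n i)),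
              T.card = k ∧ AddSubgroup.closure (T : Set (∀ i : Fin s, R ⧸ (Ideal.span {π}) ^ (n i))) = ⊤}
            ≤ Sf.card := Nat.sInf_le (show Sf.card ∈ {k : ℕ | ∃ T : Finset (∀ i : Fin s, R ⧸ (Ideal.span {π}) ^ (n i)),
              T.card = k ∧ AddSubgroup.closure (T : Set (∀ i : Fin s, R ⧸ (Ideal.span {π}) ^ (n i))) = ⊤} from ⟨Sf, rfl, hKtop⟩)
          _ ≤ T.card := Finset.card_image_le
          _ = _ := hTcard
      · have hne : {k : ℕ | ∃ T : Finset (∀ i : Fin s, R ⧸ (Ideal.span {π}) ^ (n i)),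
            T.card = k ∧ AddSubgroup.closure (T : Set (∀ i : Fin s, R ⧸ (Ideal.span {π}) ^ (n i))) = ⊤}.Nonempty := by
          haveI : Fintype (∀ i : Fin s, R ⧸ (Ideal.span {π}) ^ (n i)) := Fintype.ofFinite _
          refine ⟨(Finset.univ : Finset (∀ i : Fin s, R ⧸ (Ideal.span {π}) ^ (n i))).card, ?_⟩
          exact ⟨Finset.univ, rfl, by rw [Finset.coe_univ, AddSubgroup.closure_univ]⟩
        obtain ⟨Sf, hScard, hScl⟩ := Nat.sInf_mem hne
        set f := (N.mkQ).toAddMonoidHom with hfdef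
        have hcl : AddSubgroup.closure (Sf.image f : Set ((∀ i : Fin s, R ⧸ (Ideal.span {π}) ^ (n i)) ⧸ N)) = ⊤ := by
          rw [Finset.coe_image, ← AddMonoidHom.map_closure, hScl]
          exact AddSubgroup.map_top_of_surjective f (Submodule.Quotient.mk_surjective N)
        calc sInf {k : ℕ | ∃ T : Finset ((∀ i : Fin s, R ⧸ (Ideal.span {π}) ^ (n i)) ⧸ N),
              T.card = k ∧ AddSubgroup.closure (T : Set ((∀ i : Fin s, R ⧸ (Ideal.span {π}) ^ (n i)) ⧸ N)) = ⊤}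
            ≤ (Sf.image f).card := Nat.sInf_le (show (Sf.image f).card ∈ {k : ℕ |
              ∃ T : Finset ((∀ i : Fin s, R ⧸ (Ideal.span {π}) ^ (n i)) ⧸ N), T.card = k ∧ AddSubgroup.closure (T : Set ((∀ i : Fin s, R ⧸ (Ideal.span {π}) ^ (n i)) ⧸ N)) = ⊤} from
              ⟨Sf.image f, rfl, hcl⟩)
          _ ≤ Sf.card := Finset.card_image_le
          _ = _ := hScard
    rw [hstep, aux_mingen_eq_finrank p]
    have hminle : ∀ i : Fin s, 1 ≤ min (n i) (p - 1) ∧ min (n i) (p - 1) ≤ p - 1 := fun i =>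
      ⟨by have := hpos i; omega, by omega⟩
    have hsup : ∀ i : Fin s,
        (Ideal.span {π}) ^ (n i) ⊔ Ideal.span {c} = (Ideal.span {π}) ^ (min (n i) (p - 1)) := by
      intro i
      rw [hcdef, hspanp]
      rcases le_total (n i) (p - 1) with h | h
      · rw [min_eq_left h]
        exact sup_eq_left.mpr (Ideal.pow_le_pow_right h)
      · rw [min_eq_right h]
        exact sup_eq_right.mpr (Ideal.pow_le_pow_right h)
    have eQ : ((∀ i : Fin s, R ⧸ (Ideal.span {π}) ^ (n i)) ⧸ N)
        ≃ (∀ i : Fin s, R ⧸ (Ideal.span {π}) ^ (min (n i) (p - 1))) := by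
      refine (Submodule.quotientPi Npi).toEquiv.trans (Equiv.piCongrRight fun i => ?_)
      refine (Submodule.Quotient.restrictScalarsEquiv R _).toEquiv.trans ?_
      exact ((DoubleQuot.quotQuotEquivQuotSup ((Ideal.span {π}) ^ (n i))
        (Ideal.span {c})).trans (Ideal.quotEquivOfEq (hsup i))).toEquiv
    have hcardQ : Nat.card ((∀ i : Fin s, R ⧸ (Ideal.span {π}) ^ (n i)) ⧸ N)
        = p ^ (∑ i : Fin s, min (n i) (p - 1)) := by
      rw [Nat.card_congr eQ, Nat.card_pi]
      rw [Finset.prod_congr rfl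
        (fun i _ => hcard (min (n i) (p - 1)) (hminle i).1 (hminle i).2)]
      rw [Finset.prod_pow_eq_pow_sum]
    have hcardQ2 : Nat.card ((∀ i : Fin s, R ⧸ (Ideal.span {π}) ^ (n i)) ⧸ N)
        = p ^ (Module.finrank (ZMod p) ((∀ i : Fin s, R ⧸ (Ideal.span {π}) ^ (n i)) ⧸ N)) := by
      let b := Module.finBasis (ZMod p) ((∀ i : Fin s, R ⧸ (Ideal.span {π}) ^ (n i)) ⧸ N)
      rw [Nat.card_congr b.equivFun.toEquiv, Nat.card_fun, Nat.card_zmod,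
        Nat.card_eq_fintype_card, Fintype.card_fin]
    have hfr := Nat.pow_right_injective hp2 (hcardQ2.symm.trans hcardQ)
    rw [hfr, aux_sum_min n (p - 1)]


/-- With `H`, `A`, `x`, `𝔒 = ℤ_p[X]/(g)`, `𝔓 = (π)` and
`θ : A ≅ ⊕_{i=1}^s 𝔒/𝔓^(n_i)` as in the context, the quotient `A/γ₂(H)`
(with `γ₂(H) = lowerCentralSeries H 1`) is elementary abelian of rank `s = ℓ(λ)`,
and the minimal number of generators of `A` equals `Σ_{j=1}^{p-1} d_j`, where
`d_j = #{i | n_i ≥ j}`. -/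
theorem stmt_9 (p : ℕ) [Fact p.Prime]
    (H : Type) [Group H] (A : Subgroup H) [A.Normal] [Finite A]
    (hab : ∀ a ∈ A, ∀ b ∈ A, a * b = b * a)
    (hpgrp : IsPGroup p A)
    (x : H)
    (hgen : Subgroup.closure ((A : Set H) ∪ {x}) = ⊤)
    (hxgen : ∀ q : H ⧸ A, q ∈ Subgroup.zpowers (QuotientGroup.mk x : H ⧸ A))
    (hord : ∃ k : ℕ, orderOf (QuotientGroup.mk x : H ⧸ A) = p ^ k)
    (hsplit : ∀ a ∈ A, ((List.range p).map (fun i => (x ^ i)⁻¹ * a * x ^ i)).prod = 1)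
    (g : ℤ_[p][X]) (hg : g = ∑ i ∈ Finset.Icc 1 p, C (p.choose i : ℤ_[p]) * X ^ (i - 1))
    (s : ℕ) (n : Fin s → ℕ) (hanti : Antitone n) (hpos : ∀ i, 1 ≤ n i)
    (θ : A → ⨁ i : Fin s, (ℤ_[p][X] ⧸ Ideal.span {g}) ⧸
        (Ideal.span {Ideal.Quotient.mk (Ideal.span {g}) X}) ^ (n i))
    (hbij : Function.Bijective θ)
    (hadd : ∀ a b : A, θ (a * b) = θ a + θ b)
    (hint : ∀ (a : H) (ha : a ∈ A) (hb : x⁻¹ * a * x ∈ A),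
      θ ⟨x⁻¹ * a * x, hb⟩ = (1 + Ideal.Quotient.mk (Ideal.span {g}) X) • θ ⟨a, ha⟩) :
    Nonempty ((↥A ⧸ (((⊤ : Subgroup H).lowerCentralSeries 1).subgroupOf A)) ≃*
        Multiplicative (Fin s → ZMod p)) ∧
    sInf {k : ℕ | ∃ S : Finset ↥A, S.card = k ∧ Subgroup.closure (S : Set ↥A) = ⊤} =
      ∑ j ∈ Finset.Icc 1 (p - 1), (Finset.univ.filter (fun i : Fin s => j ≤ n i)).card := by
  classical
  obtain ⟨ε⟩ := aux_emap1 p g hg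
  have hcard : ∀ m : ℕ, 1 ≤ m → m ≤ p - 1 →
      Nat.card ((ℤ_[p][X] ⧸ Ideal.span {g}) ⧸
        (Ideal.span {Ideal.Quotient.mk (Ideal.span {g}) X}) ^ m) = p ^ m := by
    intro m h1 h2
    obtain ⟨e⟩ := aux_emap p g hg m h1 h2
    rw [Nat.card_congr e.toEquiv, aux_card_quot]
  set θ' : ↥A → ∀ i : Fin s, (ℤ_[p][X] ⧸ Ideal.span {g}) ⧸
      (Ideal.span {Ideal.Quotient.mk (Ideal.span {g}) X}) ^ (n i) :=
    fun a i => θ a i with hθ'def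
  have hθ'bij : Function.Bijective θ' := by
    have h : θ' = (fun v => DFinsupp.equivFunOnFintype v) ∘ θ := rfl
    rw [h]
    exact (DFinsupp.equivFunOnFintype.bijective).comp hbij
  have hθ'add : ∀ a b : ↥A, θ' (a * b) = θ' a + θ' b := by
    intro a b; funext i
    show θ (a * b) i = θ a i + θ b i
    rw [hadd a b]; rfl
  have hθ'int : ∀ (a : H) (ha : a ∈ A) (hb : x⁻¹ * a * x ∈ A),
      θ' ⟨x⁻¹ * a * x, hb⟩ = fun i =>
        (1 + Ideal.Quotient.mk (Ideal.span {g}) X) • θ' ⟨a, ha⟩ i := by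
    intro a ha hb; funext i
    show θ ⟨x⁻¹ * a * x, hb⟩ i = _
    rw [hint a ha hb]
    exact DFinsupp.smul_apply _ _ _
  exact aux_main p H A hab x hgen s n hpos _ (Ideal.Quotient.mk (Ideal.span {g}) X)
    (aux_span_p p g hg) ε hcard θ' hθ'bij hθ'add hθ'int
end

section
/- Let A be an abelian group (written additively) and σ an endomorphism of A such that (σ − 1)^{p−1}·a = 0 for all a ∈ A and p·((σ − 1)·a) = 0 for all a ∈ A. Then the norm map of σ equals multiplication by p: Σ_{i=0}^{p−1} σ^i(a) = p·a for every a ∈ A. -/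
lemma aux_binom {R : Type*} [Ring R] (τ : R) (n : ℕ) :
    (1 + τ)^n = ∑ k ∈ Finset.range (n+1), n.choose k • τ^k := by
  rw [add_comm, (Commute.one_right τ).add_pow]
  simp [nsmul_eq_mul, (Nat.cast_commute _ _).eq, mul_assoc]

lemma aux_geom {R : Type*} [Ring R] (τ : R) (n : ℕ) :
    ∑ i ∈ Finset.range n, (1 + τ)^i
      = ∑ k ∈ Finset.range n, n.choose (k+1) • τ^k := by
  induction n with
  | zero => simp
  | succ n ih =>
    rw [Finset.sum_range_succ, ih, aux_binom]
    have h1 : ∑ k ∈ Finset.range n, n.choose (k+1) • τ^k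
        = ∑ k ∈ Finset.range (n+1), n.choose (k+1) • τ^k := by
      rw [Finset.sum_range_succ, Nat.choose_succ_self, zero_smul, add_zero]
    rw [h1, ← Finset.sum_add_distrib]
    refine Finset.sum_congr rfl fun k _ => ?_
    rw [← add_smul, Nat.choose_succ_succ (n) (k)]
    rw [Nat.add_comm (n.choose (k+1))]

/-- Let `A` be an abelian group and `σ` an endomorphism of `A` with
`(σ - 1)^(p-1) = 0` on `A` and `p·((σ - 1)·a) = 0` for all `a`.  Then the norm map of
`σ` is multiplication by `p`:  `Σ_{i=0}^{p-1} σ^i(a) = p·a` for every `a ∈ A`. -/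
theorem stmt_13 (p : ℕ) (hp : p.Prime)
    (A : Type) [AddCommGroup A] (σ : AddMonoid.End A)
    (h1 : ∀ a : A, ((σ - 1) ^ (p - 1)) a = 0)
    (h2 : ∀ a : A, p • ((σ - 1) a) = 0) :
    ∀ a : A, ∑ i ∈ Finset.range p, (σ ^ i) a = p • a := by
  set τ : AddMonoid.End A := σ - 1 with hτ
  have hτp : τ ^ (p - 1) = 0 := AddMonoidHom.ext h1
  have hpτ : p • τ = 0 := AddMonoidHom.ext h2
  have hστ : σ = 1 + τ := by rw [hτ]; abel
  -- each term with k ≥ 1 vanishes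
  have hzero : ∀ k ∈ Finset.Ico 1 p, p.choose (k+1) • τ^k = (0 : AddMonoid.End A) := by
    intro k hk
    obtain ⟨hk1, hkp⟩ := Finset.mem_Ico.mp hk
    by_cases hk2 : k = p - 1
    · subst hk2; rw [hτp]; exact smul_zero _
    · have hk3 : k + 1 < p := by omega
      obtain ⟨m, hm⟩ := hp.dvd_choose_self (Nat.succ_ne_zero k) hk3
      have hτk : τ^k = τ^(k-1) * τ := by
        rw [← pow_succ]; congr 1; omega
      rw [hm, hτk, mul_comm p m, mul_smul, ← mul_smul_comm, hpτ,
        mul_zero]; exact smul_zero _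
  have hsum : ∑ i ∈ Finset.range p, σ^i = p • (1 : AddMonoid.End A) := by
    rw [hστ, aux_geom]
    have hsplit : Finset.range p = insert 0 (Finset.Ico 1 p) := by
      ext x
      simp only [Finset.mem_range, Finset.mem_insert, Finset.mem_Ico]
      have := hp.pos
      omega
    rw [hsplit, Finset.sum_insert (by simp), Finset.sum_congr rfl hzero]
    simp [hp.pos]
  intro a
  calc ∑ i ∈ Finset.range p, (σ^i) a
      = (∑ i ∈ Finset.range p, σ^i) a := by
        exact (AddMonoidHom.finset_sum_apply _ _ _).symm
    _ = p • a := by rw [hsum]; rfl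
end

section
/- Let 𝔬 be a discrete valuation ring with maximal ideal 𝔭, and let f = X^e + a_{e−1}X^{e−1} + ⋯ + a_0 be an Eisenstein polynomial over 𝔬 (so e ≥ 1, a_0, …, a_{e−1} ∈ 𝔭 and a_0 ∉ 𝔭²). Then 𝔒 = 𝔬[X]/(f) is a discrete valuation ring; the classes of 1, X, …, X^{e−1} form a basis of 𝔒 as a free 𝔬-module of rank e; the maximal ideal of 𝔒 is 𝔓 = (x̄), where x̄ is the image of X; and 𝔭𝔒 = 𝔓^{e}. -/
open Polynomial


set_option maxHeartbeats 1000000 in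
theorem aux16 (𝔬 : Type) [CommRing 𝔬] [IsDomain 𝔬] [IsDiscreteValuationRing 𝔬]
    (f : 𝔬[X]) (hmonic : f.Monic) (he : 1 ≤ f.natDegree)
    (hcoeff : ∀ i < f.natDegree, f.coeff i ∈ IsLocalRing.maximalIdeal 𝔬)
    (hc0 : f.coeff 0 ∉ (IsLocalRing.maximalIdeal 𝔬) ^ 2) :
    (∃ h : IsDomain (AdjoinRoot f), @IsDiscreteValuationRing (AdjoinRoot f) _ h) ∧
    (∃ b : Module.Basis (Fin f.natDegree) 𝔬 (AdjoinRoot f),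
        ∀ i : Fin f.natDegree, b i = (AdjoinRoot.root f) ^ (i : ℕ)) ∧
    (Ideal.span {AdjoinRoot.root f}).IsMaximal ∧
    (∀ m : Ideal (AdjoinRoot f), m.IsMaximal → m = Ideal.span {AdjoinRoot.root f}) ∧
    Ideal.map (algebraMap 𝔬 (AdjoinRoot f)) (IsLocalRing.maximalIdeal 𝔬) =
      (Ideal.span {AdjoinRoot.root f}) ^ f.natDegree := by
  have hfne : f ≠ 0 := hmonic.ne_zero
  have hdeg0 : f.degree ≠ 0 := by
    rw [Polynomial.degree_eq_natDegree hfne]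
    exact_mod_cast Nat.one_le_iff_ne_zero.mp he
  have hdegpos : 0 < f.degree := by
    rw [Polynomial.degree_eq_natDegree hfne]
    exact_mod_cast he
  have hP : (IsLocalRing.maximalIdeal 𝔬).IsPrime :=
    (IsLocalRing.maximalIdeal.isMaximal 𝔬).isPrime
  -- Eisenstein criterion: f is irreducible, so the quotient is a domain
  have hfirr : Irreducible f := by
    apply Polynomial.irreducible_of_eisenstein_criterion hP
    · rw [hmonic.leadingCoeff]
      exact fun h => (IsLocalRing.maximalIdeal.isMaximal 𝔬).ne_top
        (Ideal.eq_top_of_isUnit_mem _ h isUnit_one)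
    · exact fun n hn => hcoeff n (Polynomial.coe_lt_degree.mp hn)
    · exact hdegpos
    · exact hc0
    · exact hmonic.isPrimitive
  have hfprime : Prime f := UniqueFactorizationMonoid.irreducible_iff_prime.mp hfirr
  haveI hIprime : (Ideal.span {f}).IsPrime := (Ideal.span_singleton_prime hfne).mpr hfprime
  haveI hdom : IsDomain (AdjoinRoot f) := Ideal.Quotient.isDomain (Ideal.span {f})
  haveI hnoe : IsNoetherianRing (AdjoinRoot f) := Ideal.Quotient.isNoetherianRing (Ideal.span {f})
  set x := AdjoinRoot.root f with hxx
  set A := algebraMap 𝔬 (AdjoinRoot f) with hA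
  have Ainj : Function.Injective A := by
    rw [hA, AdjoinRoot.algebraMap_eq]
    exact AdjoinRoot.of.injective_of_degree_ne_zero hdeg0
  -- a uniformizer π of 𝔬, and the unit relation with the constant coefficient
  obtain ⟨π, hπ⟩ := (IsPrincipalIdealRing.principal (IsLocalRing.maximalIdeal 𝔬)).principal
  have ha0P : f.coeff 0 ∈ IsLocalRing.maximalIdeal 𝔬 := hcoeff 0 he
  obtain ⟨u, hu⟩ := Ideal.mem_span_singleton'.mp (hπ ▸ ha0P)
  have huu : IsUnit u := by
    by_contra hun
    apply hc0
    have humem : u ∈ IsLocalRing.maximalIdeal 𝔬 := hun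
    obtain ⟨v, hv⟩ := Ideal.mem_span_singleton'.mp (hπ ▸ humem)
    have hev : f.coeff 0 = (v * π) * π := by rw [hv, hu]
    rw [sq, hπ, hev]
    exact Ideal.mul_mem_mul (Ideal.mem_span_singleton'.mpr ⟨v, rfl⟩)
      (Ideal.mem_span_singleton_self π)
  have spanP : Ideal.span {f.coeff 0} = IsLocalRing.maximalIdeal 𝔬 := by
    rw [hπ]
    exact (Ideal.span_singleton_eq_span_singleton.mpr
      ⟨huu.unit, by rw [IsUnit.unit_spec, mul_comm, hu]⟩).symm
  -- the fundamental relation x^e = -∑ a_i x^i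
  obtain ⟨d, hd⟩ : ∃ d, f.natDegree = d + 1 := ⟨f.natDegree - 1, by omega⟩
  have hxe : x ^ f.natDegree +
      (∑ i ∈ Finset.range f.natDegree, A (f.coeff i) * x ^ i) = 0 := by
    have h0 : AdjoinRoot.mk f (X ^ f.natDegree
        + ∑ i ∈ Finset.range f.natDegree, C (f.coeff i) * X ^ i) = 0 := by
      rw [← hmonic.as_sum]; exact AdjoinRoot.mk_self
    simpa [hA, AdjoinRoot.algebraMap_eq, AdjoinRoot.mk_X] using h0
  rw [hd] at hxe
  have hsplit := Finset.sum_range_succ' (fun i => A (f.coeff i) * x ^ i) d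
  rw [hsplit] at hxe
  have ha0 : A (f.coeff 0) = - x ^ (d+1)
      - ∑ i ∈ Finset.range d, A (f.coeff (i+1)) * x ^ (i+1) := by
    have h1 : A (f.coeff 0) * x ^ 0 = A (f.coeff 0) := by rw [pow_zero, mul_one]
    rw [h1] at hxe
    linear_combination hxe
  -- key: A (f.coeff 0) ∈ (x)^k for all k ≤ e
  have ha0mem : ∀ k, k ≤ d + 1 → A (f.coeff 0) ∈ Ideal.span {x} ^ k := by
    intro k
    induction k with
    | zero => intro _; simp
    | succ k ih =>
      intro hk
      have ihk := ih (Nat.le_of_succ_le hk)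
      rw [ha0]
      refine Ideal.sub_mem _ (Submodule.neg_mem _ ?_) (Ideal.sum_mem _ fun i hi => ?_)
      · rw [Ideal.span_singleton_pow]
        exact Ideal.mem_span_singleton.mpr (pow_dvd_pow x hk)
      · have hilt : i + 1 < f.natDegree := by
          rw [hd]; have := Finset.mem_range.mp hi; omega
        obtain ⟨c, hc⟩ := Ideal.mem_span_singleton'.mp (spanP ▸ hcoeff (i+1) hilt)
        have hre : A (f.coeff (i+1)) * x ^ (i+1)
            = (A c * x ^ i) * (A (f.coeff 0) * x) := by
          rw [← hc, map_mul]; ring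
        rw [hre, pow_succ]
        exact Ideal.mul_mem_left _ _
          (Ideal.mul_mem_mul ihk (Ideal.mem_span_singleton_self x))
  -- 𝔭𝔒 = (x)^e
  have hmapP : Ideal.map A (IsLocalRing.maximalIdeal 𝔬) = Ideal.span {A (f.coeff 0)} := by
    rw [← spanP, Ideal.map_span, Set.image_singleton]
  have h_pe : Ideal.map A (IsLocalRing.maximalIdeal 𝔬) = Ideal.span {x} ^ f.natDegree := by
    rw [hmapP, hd]
    apply le_antisymm
    · exact (Ideal.span_singleton_le_iff_mem _).mpr (ha0mem (d+1) le_rfl)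
    · rw [Ideal.span_singleton_pow]
      refine (Ideal.span_singleton_le_iff_mem _).mpr ?_
      have hx1 : x ^ (d+1) = - A (f.coeff 0)
          - ∑ i ∈ Finset.range d, A (f.coeff (i+1)) * x ^ (i+1) := by
        linear_combination ha0
      rw [hx1]
      refine Ideal.sub_mem _ (Submodule.neg_mem _ (Ideal.mem_span_singleton_self _))
        (Ideal.sum_mem _ fun i hi => ?_)
      have hilt : i + 1 < f.natDegree := by
        rw [hd]; have := Finset.mem_range.mp hi; omega
      obtain ⟨c, hc⟩ := Ideal.mem_span_singleton'.mp (spanP ▸ hcoeff (i+1) hilt)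
      refine Ideal.mul_mem_right _ _ (Ideal.mem_span_singleton'.mpr ⟨A c, ?_⟩)
      rw [← map_mul, hc]
  -- maximality of (x) via the residue field
  have heval : Polynomial.eval₂ (Ideal.Quotient.mk (IsLocalRing.maximalIdeal 𝔬)) 0 f = 0 := by
    rw [Polynomial.eval₂_at_zero, Ideal.Quotient.eq_zero_iff_mem]
    exact ha0P
  set φ := AdjoinRoot.lift (Ideal.Quotient.mk (IsLocalRing.maximalIdeal 𝔬)) 0 heval with hφ
  have hφx : φ x = 0 := AdjoinRoot.lift_root heval
  have hφA : ∀ r, φ (A r) = Ideal.Quotient.mk (IsLocalRing.maximalIdeal 𝔬) r := fun r => by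
    rw [hA, AdjoinRoot.algebraMap_eq]; exact AdjoinRoot.lift_of heval
  have hsurj : Function.Surjective φ := fun y => by
    obtain ⟨r, rfl⟩ := Ideal.Quotient.mk_surjective y
    exact ⟨A r, hφA r⟩
  have ha01 : A (f.coeff 0) ∈ Ideal.span {x} := by
    have := ha0mem 1 (by omega)
    rwa [pow_one] at this
  have hker : RingHom.ker φ = Ideal.span {x} := by
    apply le_antisymm
    · intro y hy
      obtain ⟨g, rfl⟩ := AdjoinRoot.mk_surjective y
      have hg0 : g.coeff 0 ∈ IsLocalRing.maximalIdeal 𝔬 := by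
        have h1 : φ (AdjoinRoot.mk f g)
            = Ideal.Quotient.mk (IsLocalRing.maximalIdeal 𝔬) (g.coeff 0) := by
          rw [hφ, AdjoinRoot.lift_mk, Polynomial.eval₂_at_zero]
        rw [RingHom.mem_ker, h1, Ideal.Quotient.eq_zero_iff_mem] at hy
        exact hy
      obtain ⟨h', hh⟩ := Polynomial.X_dvd_iff.mpr
        (show (g - C (g.coeff 0)).coeff 0 = 0 by simp)
      have hgdec : g = X * h' + C (g.coeff 0) := by rw [← hh]; ring
      rw [hgdec, map_add, map_mul, AdjoinRoot.mk_X]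
      refine Ideal.add_mem _
        (Ideal.mul_mem_right _ _ (Ideal.mem_span_singleton_self x)) ?_
      obtain ⟨c, hc⟩ := Ideal.mem_span_singleton'.mp (spanP ▸ hg0)
      have hmkC : AdjoinRoot.mk f (C (g.coeff 0)) = A c * A (f.coeff 0) := by
        rw [hA, AdjoinRoot.algebraMap_eq, ← map_mul, hc]
        rfl
      rw [hmkC]
      exact Ideal.mul_mem_left _ _ ha01
    · refine (Ideal.span_singleton_le_iff_mem _).mpr ?_
      rw [RingHom.mem_ker]
      exact hφx
  letI : Field (𝔬 ⧸ IsLocalRing.maximalIdeal 𝔬) := Ideal.Quotient.field _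
  have hmax : (Ideal.span {x}).IsMaximal :=
    hker ▸ RingHom.ker_isMaximal_of_surjective φ hsurj
  -- uniqueness of the maximal ideal
  haveI : Module.Finite 𝔬 (AdjoinRoot f) :=
    Module.Finite.of_basis (AdjoinRoot.powerBasis' hmonic).basis
  haveI : Algebra.IsIntegral 𝔬 (AdjoinRoot f) := Algebra.IsIntegral.of_finite _ _
  have huniq : ∀ m : Ideal (AdjoinRoot f), m.IsMaximal → m = Ideal.span {x} := by
    intro m hm
    haveI := hm
    have hcomap : (Ideal.comap A m).IsMaximal :=
      Ideal.isMaximal_comap_of_isIntegral_of_isMaximal m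
    have hcP : Ideal.comap A m = IsLocalRing.maximalIdeal 𝔬 :=
      IsLocalRing.eq_maximalIdeal hcomap
    have hle : Ideal.map A (IsLocalRing.maximalIdeal 𝔬) ≤ m :=
      Ideal.map_le_iff_le_comap.mpr (le_of_eq hcP.symm)
    have hmem : x ^ f.natDegree ∈ m := by
      apply hle
      rw [h_pe, Ideal.span_singleton_pow]
      exact Ideal.mem_span_singleton_self _
    have hxm : x ∈ m := hm.isPrime.mem_of_pow_mem _ hmem
    exact (hmax.eq_of_le hm.ne_top
      (Ideal.span_le.mpr (Set.singleton_subset_iff.mpr hxm))).symm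
  -- local ring, not a field, DVR
  haveI hloc : IsLocalRing (AdjoinRoot f) :=
    IsLocalRing.of_unique_max_ideal ⟨Ideal.span {x}, hmax, fun m hm => huniq m hm⟩
  have hmaxid : IsLocalRing.maximalIdeal (AdjoinRoot f) = Ideal.span {x} :=
    huniq _ (IsLocalRing.maximalIdeal.isMaximal _)
  have hne : Ideal.span {x} ≠ (⊥ : Ideal (AdjoinRoot f)) := by
    intro hbot
    have h1 : A (f.coeff 0) = 0 := by
      have := ha01
      rw [hbot] at this
      simpa using this
    have h2 : f.coeff 0 = 0 := Ainj (by simpa using h1)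
    exact hc0 (h2 ▸ zero_mem _)
  have hnf : ¬ IsField (AdjoinRoot f) := by
    rw [IsLocalRing.isField_iff_maximalIdeal_eq, hmaxid]
    exact hne
  have hdvr : IsDiscreteValuationRing (AdjoinRoot f) :=
    ((IsDiscreteValuationRing.TFAE (AdjoinRoot f) hnf).out 0 4).mpr
      (⟨⟨x, by rw [hmaxid]⟩⟩ : (IsLocalRing.maximalIdeal (AdjoinRoot f)).IsPrincipal)
  exact ⟨⟨hdom, hdvr⟩,
    ⟨(AdjoinRoot.powerBasis' hmonic).basis, fun i =>
      ((AdjoinRoot.powerBasis' hmonic).basis_eq_pow i).trans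
        (by rw [AdjoinRoot.powerBasis'_gen])⟩,
    hmax, huniq, h_pe⟩

/-- Let `𝔬` be a discrete valuation ring with maximal ideal `𝔭`,
and `f = X^e + a_{e-1}X^{e-1} + ⋯ + a_0` an Eisenstein polynomial over `𝔬` (`e ≥ 1`,
`a_i ∈ 𝔭`, `a_0 ∉ 𝔭²`).  Then `𝔒 = 𝔬[X]/(f)` is a discrete valuation ring; the classes
of `1, X, …, X^{e-1}` form a basis of `𝔒` as a free `𝔬`-module of rank `e`; the maximal
ideal of `𝔒` is `𝔓 = (x̄)` (i.e. `(x̄)` is maximal and is the unique maximal ideal),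
where `x̄` is the image of `X`; and `𝔭𝔒 = 𝔓^e`. -/
theorem stmt_16 (𝔬 : Type) [CommRing 𝔬] [IsDomain 𝔬] [IsDiscreteValuationRing 𝔬]
    (e : ℕ) (he : 1 ≤ e) (f : 𝔬[X]) (hmonic : f.Monic) (hdeg : f.natDegree = e)
    (hcoeff : ∀ i < e, f.coeff i ∈ IsLocalRing.maximalIdeal 𝔬)
    (hc0 : f.coeff 0 ∉ (IsLocalRing.maximalIdeal 𝔬) ^ 2) :
    (∃ h : IsDomain (𝔬[X] ⧸ Ideal.span {f}),
        @IsDiscreteValuationRing (𝔬[X] ⧸ Ideal.span {f}) _ h) ∧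
    (∃ b : Module.Basis (Fin e) 𝔬 (𝔬[X] ⧸ Ideal.span {f}),
        ∀ i : Fin e, b i = (Ideal.Quotient.mk (Ideal.span {f}) X) ^ (i : ℕ)) ∧
    (Ideal.span {Ideal.Quotient.mk (Ideal.span {f}) X}).IsMaximal ∧
    (∀ m : Ideal (𝔬[X] ⧸ Ideal.span {f}), m.IsMaximal →
        m = Ideal.span {Ideal.Quotient.mk (Ideal.span {f}) X}) ∧
    Ideal.map (algebraMap 𝔬 (𝔬[X] ⧸ Ideal.span {f})) (IsLocalRing.maximalIdeal 𝔬) =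
      (Ideal.span {Ideal.Quotient.mk (Ideal.span {f}) X}) ^ e := by
  subst hdeg
  exact aux16 𝔬 f hmonic he hcoeff hc0
end
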